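/- There exists a bounded idempotent operator P : ℓ_∞ → ℓ_∞ with infinite-dimensional range such that c_0 ⊆ ker P. -/

import Mathlib

/-- The canonical copy of `c₀` inside `ℓ_∞`: the closed span of the unit vectors. -/
noncomputable def c0sub : Submodule ℝ (lp (fun _ : ℕ => ℝ) ⊤) :=
  (Submodule.span ℝ
    {x : lp (fun _ : ℕ => ℝ) ⊤ | ∃ i : ℕ, ⇑x = Set.indicator {i} (1 : ℕ → ℝ)}).topologicalClosure


open Filter Topology
set_option synthInstance.maxHeartbeats 1000000
set_option maxHeartbeats 1000000

noncomputable def UF : Ultrafilter ℕ := Ultrafilter.of Filter.cofinite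

noncomputable def philim (f : ℕ → ℝ) : ℝ := limUnder (UF : Filter ℕ) f

lemma philim_eq {f : ℕ → ℝ} {a : ℝ} (h : Tendsto f (UF : Filter ℕ) (𝓝 a)) :
    philim f = a := h.limUnder_eq

lemma philim_tendsto {f : ℕ → ℝ} {C : ℝ} (h : ∀ n, |f n| ≤ C) :
    Tendsto f (UF : Filter ℕ) (𝓝 (philim f)) := by
  obtain ⟨a, _, ha⟩ := (isCompact_Icc (a := -C) (b := C)).ultrafilter_le_nhds
    (UF.map f) (by
      rw [Ultrafilter.coe_map, le_principal_iff, Filter.mem_map]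
      exact Filter.univ_mem' fun n => abs_le.1 (h n))
  have ht : Tendsto f (UF : Filter ℕ) (𝓝 a) := ha
  rwa [philim_eq ht]

lemma philim_const (c : ℝ) : philim (fun _ => c) = c :=
  philim_eq tendsto_const_nhds

lemma philim_abs_le {f : ℕ → ℝ} {C : ℝ} (h : ∀ n, |f n| ≤ C) : |philim f| ≤ C := by
  have := isClosed_Icc.mem_of_tendsto (philim_tendsto h)
    (Filter.Eventually.of_forall fun n => abs_le.1 (h n))
  exact abs_le.2 this

lemma philim_cofinite_zero {f : ℕ → ℝ} (h : {n | f n ≠ 0}.Finite) : philim f = 0 := by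
  apply philim_eq
  have h1 : ∀ᶠ n in Filter.cofinite, f n = 0 := by
    rw [Filter.eventually_cofinite]; simpa using h
  have h2 : ∀ᶠ n in (UF : Filter ℕ), f n = 0 := (Ultrafilter.of_le _) h1
  exact Tendsto.congr' (h2.mono fun n hn => hn.symm) tendsto_const_nhds

lemma philim_add {f g : ℕ → ℝ} {Cf Cg : ℝ} (hf : ∀ n, |f n| ≤ Cf) (hg : ∀ n, |g n| ≤ Cg) :
    philim (fun n => f n + g n) = philim f + philim g :=
  philim_eq ((philim_tendsto hf).add (philim_tendsto hg))

lemma philim_smul {f : ℕ → ℝ} {Cf : ℝ} (c : ℝ) (hf : ∀ n, |f n| ≤ Cf) :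
    philim (fun n => c * f n) = c * philim f :=
  philim_eq ((philim_tendsto hf).const_mul c)

noncomputable abbrev Linf := lp (fun _ : ℕ => ℝ) ⊤

def pe : ℕ × ℕ ≃ ℕ := Denumerable.eqv (ℕ × ℕ)

def idx (k : ℕ) : ℕ := (pe.symm k).1

@[simp] lemma idx_pe (n j : ℕ) : idx (pe (n, j)) = n := by simp [idx]

noncomputable def Pfun (x : ℕ → ℝ) (k : ℕ) : ℝ := philim (fun j => x (pe (idx k, j)))

lemma coe_abs_le (x : Linf) (i : ℕ) : |x i| ≤ ‖x‖ := by
  rw [← Real.norm_eq_abs]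
  exact lp.norm_apply_le_norm ENNReal.top_ne_zero x i

lemma Pfun_abs_le (x : Linf) (k : ℕ) : |Pfun (⇑x) k| ≤ ‖x‖ :=
  philim_abs_le fun j => coe_abs_le x _

lemma Pfun_mem (x : Linf) : Memℓp (Pfun ⇑x) ⊤ :=
  memℓp_infty ⟨‖x‖, by rintro - ⟨k, rfl⟩; simpa using Pfun_abs_le x k⟩

noncomputable def Plin : Linf →ₗ[ℝ] Linf where
  toFun x := ⟨Pfun ⇑x, Pfun_mem x⟩
  map_add' x y := by
    apply lp.ext
    funext k
    show Pfun (⇑(x + y)) k = Pfun ⇑x k + Pfun ⇑y k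
    have : ⇑(x + y) = ⇑x + ⇑y := lp.coeFn_add x y
    simp only [Pfun, this, Pi.add_apply]
    exact philim_add (fun j => coe_abs_le x _) (fun j => coe_abs_le y _)
  map_smul' c x := by
    apply lp.ext
    funext k
    show Pfun (⇑(c • x)) k = c * Pfun ⇑x k
    have : ⇑(c • x) = c • ⇑x := lp.coeFn_smul c x
    simp only [Pfun, this, Pi.smul_apply, smul_eq_mul]
    exact philim_smul c (fun j => coe_abs_le x _)

noncomputable def Pop : Linf →L[ℝ] Linf :=
  Plin.mkContinuous 1 fun x => by
    rw [one_mul]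
    exact lp.norm_le_of_forall_le (norm_nonneg x) fun k => by
      exact (Real.norm_eq_abs _).trans_le (Pfun_abs_le x k)

lemma Pop_apply (x : Linf) (k : ℕ) : (Pop x) k = Pfun ⇑x k := rfl

lemma Pop_idem (x : Linf) : Pop (Pop x) = Pop x := by
  apply lp.ext
  funext k
  show Pfun (⇑(Pop x)) k = Pfun ⇑x k
  have h1 : Pfun (⇑(Pop x)) k = philim (fun _ => Pfun ⇑x k) := by
    unfold Pfun
    congr 1
    funext j
    show Pfun ⇑x (pe (idx k, j)) = Pfun ⇑x k
    simp [Pfun, idx_pe]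
  rw [h1, philim_const]

noncomputable def vv (n : ℕ) : Linf :=
  ⟨fun k => if idx k = n then (1:ℝ) else 0,
    memℓp_infty ⟨1, by rintro - ⟨k, rfl⟩; dsimp; split <;> simp⟩⟩

lemma vv_apply (n k : ℕ) : (vv n) k = if idx k = n then (1:ℝ) else 0 := rfl

lemma Pop_vv (n : ℕ) : Pop (vv n) = vv n := by
  apply lp.ext
  funext k
  show Pfun (⇑(vv n)) k = (vv n) k
  have h1 : Pfun (⇑(vv n)) k = philim (fun _ => (vv n) k) := by
    unfold Pfun
    congr 1
    funext j
    rw [vv_apply, vv_apply, idx_pe]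
  rw [h1, philim_const]

lemma vv_linearIndependent : LinearIndependent ℝ vv := by
  rw [linearIndependent_iff']
  intro s g hsum i hi
  have := congrFun (congrArg (fun (z : Linf) => (⇑z : ℕ → ℝ)) hsum) (pe (i, 0))
  simp only [lp.coeFn_sum, Finset.sum_apply, lp.coeFn_zero, Pi.zero_apply] at this
  have h2 : ∀ m ∈ s, (⇑(g m • vv m) : ℕ → ℝ) (pe (i, 0)) = if m = i then g m else 0 := by
    intro m _
    rw [lp.coeFn_smul]
    simp only [Pi.smul_apply, smul_eq_mul, vv_apply, idx_pe]
    by_cases h : i = m <;> simp [h, eq_comm]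
  rw [Finset.sum_congr rfl h2, Finset.sum_ite_eq' s i g] at this
  simpa [hi] using this

lemma Pop_indicator (x : Linf) (i : ℕ) (hx : ⇑x = Set.indicator {i} (1 : ℕ → ℝ)) :
    Pop x = 0 := by
  apply lp.ext
  funext k
  show Pfun ⇑x k = (0 : ℕ → ℝ) k
  rw [Pi.zero_apply]
  apply philim_cofinite_zero
  apply Set.Finite.subset (Set.finite_singleton ((pe.symm i).2))
  intro j hj
  simp only [Set.mem_setOf_eq, hx] at hj
  have : pe (idx k, j) = i := by
    by_contra hne
    exact hj (Set.indicator_of_notMem (by simpa using hne) _)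
  have := congrArg (fun m => (pe.symm m).2) this
  simpa using this

theorem exists_idempotent_with_infinite_range_killing_c0 :
    ∃ P : lp (fun _ : ℕ => ℝ) ⊤ →L[ℝ] lp (fun _ : ℕ => ℝ) ⊤,
      (∀ x, P (P x) = P x) ∧
      ¬FiniteDimensional ℝ ↥(LinearMap.range (P : lp (fun _ : ℕ => ℝ) ⊤ →ₗ[ℝ] lp (fun _ : ℕ => ℝ) ⊤)) ∧
      ∀ x ∈ c0sub, P x = 0 := by
  refine ⟨Pop, Pop_idem, ?_, ?_⟩
  · intro h
    have hli : LinearIndependent ℝ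
        (fun n => (⟨vv n, ⟨vv n, Pop_vv n⟩⟩ : ↥(LinearMap.range (Pop : Linf →ₗ[ℝ] Linf)))) := by
      apply LinearIndependent.of_comp (LinearMap.range (Pop : Linf →ₗ[ℝ] Linf)).subtype
      exact vv_linearIndependent
    haveI := hli.finite
    exact not_finite ℕ
  · intro x hx
    have hker : c0sub ≤ LinearMap.ker (Pop : Linf →ₗ[ℝ] Linf) := by
      apply Submodule.topologicalClosure_minimal
      · rw [Submodule.span_le]
        rintro y ⟨i, hy⟩
        exact LinearMap.mem_ker.2 (Pop_indicator y i hy)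
      · exact ContinuousLinearMap.isClosed_ker Pop
    exact LinearMap.mem_ker.1 (hker hx)
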